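/- Let p>1, q ≥ p+1, and K₁, R > 0. There exists a constant K₀ = K₀(K₁) > 0 such that: if F∈C²([0,T)) is positive, satisfies F''(t) ≥ K₁(t+R)^{-q} F(t)^p for all t∈[T₁,T), and F(t) ≥ K₀(t+R)^{(q-2)/(p-1)} for all t∈[T₀,T) for some T₀,T₁∈[0,T), then T < ∞. -/

import Mathlib

open Set Real

lemma monoIci {f f' : ℝ → ℝ} {c : ℝ}
    (hd : ∀ t ∈ Set.Ici c, HasDerivAt f (f' t) t)
    (h0 : ∀ t ∈ Set.Ioi c, 0 ≤ f' t) : MonotoneOn f (Set.Ici c) := by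
  refine monotoneOn_of_deriv_nonneg (convex_Ici c)
    (fun t ht => (hd t ht).continuousAt.continuousWithinAt) ?_ ?_
  · intro t ht
    rw [interior_Ici] at ht
    exact (hd t (Set.Ioi_subset_Ici_self ht)).differentiableAt.differentiableWithinAt
  · intro t ht
    rw [interior_Ici] at ht
    rw [(hd t (Set.Ioi_subset_Ici_self ht)).deriv]
    exact h0 t ht

lemma antiIci {f f' : ℝ → ℝ} {c : ℝ}
    (hd : ∀ t ∈ Set.Ici c, HasDerivAt f (f' t) t)
    (h0 : ∀ t ∈ Set.Ioi c, f' t ≤ 0) : AntitoneOn f (Set.Ici c) := by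
  refine antitoneOn_of_deriv_nonpos (convex_Ici c)
    (fun t ht => (hd t ht).continuousAt.continuousWithinAt) ?_ ?_
  · intro t ht
    rw [interior_Ici] at ht
    exact (hd t (Set.Ioi_subset_Ici_self ht)).differentiableAt.differentiableWithinAt
  · intro t ht
    rw [interior_Ici] at ht
    rw [(hd t (Set.Ioi_subset_Ici_self ht)).deriv]
    exact h0 t ht

/-- Barrier lemma: if `f c ≥ 0` and the derivative is nonnegative wherever `f ≤ 0`,
then `f` stays nonnegative on `[c, ∞)`. -/
lemma barrier {f f' : ℝ → ℝ} {c : ℝ}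
    (hd : ∀ t ∈ Set.Ici c, HasDerivAt f (f' t) t)
    (h0 : 0 ≤ f c)
    (hinv : ∀ t ∈ Set.Ici c, f t ≤ 0 → 0 ≤ f' t) :
    ∀ t ∈ Set.Ici c, 0 ≤ f t := by
  intro t₄ ht₄
  by_contra hneg
  push_neg at hneg
  have hc4 : c ≤ t₄ := ht₄
  set S : Set ℝ := Set.Icc c t₄ ∩ f ⁻¹' (Set.Ici 0) with hS
  have hcS : c ∈ S := ⟨⟨le_refl c, hc4⟩, h0⟩
  have hSne : S.Nonempty := ⟨c, hcS⟩
  have hSbdd : BddAbove S := ⟨t₄, fun x hx => hx.1.2⟩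
  have hcont : ContinuousOn f (Set.Icc c t₄) := fun x hx =>
    (hd x hx.1).continuousAt.continuousWithinAt
  have hSclosed : IsClosed S :=
    hcont.preimage_isClosed_of_isClosed isClosed_Icc isClosed_Ici
  set t₅ := sSup S with ht₅
  have ht₅S : t₅ ∈ S := hSclosed.csSup_mem hSne hSbdd
  have h5le : t₅ ≤ t₄ := ht₅S.1.2
  have h5ge : c ≤ t₅ := ht₅S.1.1
  have hf5 : 0 ≤ f t₅ := ht₅S.2
  have h5lt : t₅ < t₄ := h5le.lt_of_ne (by intro h; rw [h] at hf5; linarith)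
  -- on (t₅, t₄], f < 0
  have hneg' : ∀ s, t₅ < s → s ≤ t₄ → f s < 0 := by
    intro s hs1 hs2
    by_contra h
    push_neg at h
    have : s ∈ S := ⟨⟨le_trans h5ge hs1.le, hs2⟩, h⟩
    exact absurd (le_csSup hSbdd this) (not_le.mpr hs1)
  -- f is monotone on [t₅, t₄]
  have hmono : MonotoneOn f (Set.Icc t₅ t₄) := by
    refine monotoneOn_of_deriv_nonneg (convex_Icc _ _)
      (hcont.mono (Set.Icc_subset_Icc_left h5ge)) ?_ ?_
    · intro x hx
      rw [interior_Icc] at hx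
      exact (hd x (le_trans h5ge hx.1.le)).differentiableAt.differentiableWithinAt
    · intro x hx
      rw [interior_Icc] at hx
      rw [(hd x (le_trans h5ge hx.1.le)).deriv]
      exact hinv x (le_trans h5ge hx.1.le) (hneg' x hx.1 hx.2.le).le
  have := hmono ⟨le_refl t₅, h5le⟩ ⟨h5le, le_refl t₄⟩ h5le
  linarith

set_option maxHeartbeats 1000000 in
theorem stmt1 (p q K₁ R : ℝ) (hp : 1 < p) (hq : p + 1 ≤ q) (hK₁ : 0 < K₁) (hR : 0 < R) :
    ∃ K₀ > (0:ℝ), ∀ (F : ℝ → ℝ) (T₀ T₁ : ℝ), 0 ≤ T₀ → 0 ≤ T₁ →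
      ContDiffOn ℝ 2 F (Set.Ici (0:ℝ)) →
      (∀ t ∈ Set.Ici (0:ℝ), 0 < F t) →
      (∀ t, T₁ ≤ t → K₁ * (t + R) ^ (-q) * F t ^ p ≤ deriv (deriv F) t) →
      (∀ t, T₀ ≤ t → K₀ * (t + R) ^ ((q - 2) / (p - 1)) ≤ F t) → False := by
  have hp1 : (0:ℝ) < p - 1 := by linarith
  set a : ℝ := (q - 2) / (p - 1) with ha
  have ha1 : 1 ≤ a := (one_le_div hp1).2 (by linarith)
  have hapq : a * (p - 1) = q - 2 := div_mul_cancel₀ _ hp1.ne'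
  set L : ℝ := 2 * a + 2 with hLdef
  have hL4 : 4 ≤ L := by simp only [hLdef]; linarith
  set D : ℝ := L * (2:ℝ) ^ L + L ^ 2 with hDdef
  have hDpos : 0 < D := by
    have : (0:ℝ) < (2:ℝ) ^ L := Real.rpow_pos_of_pos two_pos L
    nlinarith
  set K₀ : ℝ := (D / K₁ + 1) ^ (p - 1)⁻¹ with hK₀def
  have hK₀pos : 0 < K₀ := Real.rpow_pos_of_pos (by positivity) _
  refine ⟨K₀, hK₀pos, ?_⟩
  intro F T₀ T₁ hT₀ hT₁ hF hFpos hODE hlow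
  set C : ℝ := K₁ * K₀ ^ (p - 1) with hCdef
  have hCD : C = D + K₁ := by
    rw [hCdef, hK₀def, Real.rpow_inv_rpow (by positivity) hp1.ne']
    field_simp
  have hCpos : 0 < C := by rw [hCD]; linarith
  clear_value a L D K₀ C
  set T : ℝ := max T₀ T₁ + 1 with hTdef
  have hT1 : 1 ≤ T := by
    have h0 : 0 ≤ max T₀ T₁ := le_trans hT₀ (le_max_left _ _)
    simp only [hTdef]; linarith
  clear_value T
  -- positivity facts
  have htR : ∀ t : ℝ, T ≤ t → 0 < t + R := fun t ht => by linarith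
  have hFpos' : ∀ t : ℝ, T ≤ t → 0 < F t := fun t ht =>
    hFpos t (by simp only [Set.mem_Ici]; linarith)
  have hODE' : ∀ t : ℝ, T ≤ t → K₁ * (t + R) ^ (-q) * F t ^ p ≤ deriv (deriv F) t :=
    fun t ht => hODE t (by have := le_max_right T₀ T₁; linarith)
  have hlow' : ∀ t : ℝ, T ≤ t → K₀ * (t + R) ^ a ≤ F t :=
    fun t ht => hlow t (by have := le_max_left T₀ T₁; linarith)
  -- derivatives
  have hdF : ∀ t : ℝ, 0 < t → HasDerivAt F (deriv F t) t := by
    intro t ht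
    have h2 : ContDiffOn ℝ 2 F (Set.Ioi (0:ℝ)) := hF.mono Set.Ioi_subset_Ici_self
    exact ((h2.differentiableOn (by norm_num)).differentiableAt
      (isOpen_Ioi.mem_nhds ht)).hasDerivAt
  have hdF' : ∀ t : ℝ, 0 < t → HasDerivAt (deriv F) (deriv (deriv F) t) t := by
    intro t ht
    have h2 : ContDiffOn ℝ 2 F (Set.Ioi (0:ℝ)) := hF.mono Set.Ioi_subset_Ici_self
    have h1 : ContDiffOn ℝ 1 (deriv F) (Set.Ioi (0:ℝ)) :=
      h2.deriv_of_isOpen isOpen_Ioi (by norm_num)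
    exact ((h1.differentiableOn (by norm_num)).differentiableAt
      (isOpen_Ioi.mem_nhds ht)).hasDerivAt
  have hTpos : ∀ t : ℝ, T ≤ t → (0:ℝ) < t := fun t ht => by linarith
  -- master second-derivative bound
  have hC2 : ∀ t : ℝ, T ≤ t → C * F t ≤ (t + R) ^ 2 * deriv (deriv F) t := by
    intro t ht
    have h0 : 0 < t + R := htR t ht
    have hFt : 0 < F t := hFpos' t ht
    have h1 : K₀ ^ (p - 1) * (t + R) ^ (q - 2) ≤ F t ^ (p - 1) := by
      have h2 := Real.rpow_le_rpow (by positivity) (hlow' t ht) hp1.le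
      rwa [Real.mul_rpow hK₀pos.le (Real.rpow_nonneg h0.le _), ← Real.rpow_mul h0.le,
        hapq] at h2
    have h3 : p - 1 + 1 = p := by ring
    have h4 : F t ^ p = F t ^ (p - 1) * F t := by
      have h5 := Real.rpow_add_one hFt.ne' (p - 1)
      rwa [h3] at h5
    have h5 : (t + R) ^ (2:ℝ) * (t + R) ^ (-q) * (t + R) ^ (q - 2) = 1 := by
      rw [← Real.rpow_add h0, ← Real.rpow_add h0,
        show (2:ℝ) + -q + (q - 2) = 0 by ring, Real.rpow_zero]
    have h6 : (t + R) ^ (2:ℕ) = (t + R) ^ (2:ℝ) := by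
      rw [show (2:ℝ) = ((2:ℕ):ℝ) by norm_num, Real.rpow_natCast]
    have h8 : C ≤ K₁ * ((t + R) ^ (2:ℝ) * (t + R) ^ (-q)) * F t ^ (p - 1) := by
      have he : C = K₁ * ((t + R) ^ (2:ℝ) * (t + R) ^ (-q)) * (K₀ ^ (p - 1) * (t + R) ^ (q - 2)) := by
        rw [hCdef]
        linear_combination (-(K₁ * K₀ ^ (p - 1))) * h5
      rw [he]
      exact mul_le_mul_of_nonneg_left h1 (by positivity)
    calc C * F t ≤ (K₁ * ((t + R) ^ (2:ℝ) * (t + R) ^ (-q)) * F t ^ (p - 1)) * F t :=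
          mul_le_mul_of_nonneg_right h8 hFt.le
      _ = (t + R) ^ (2:ℝ) * (K₁ * (t + R) ^ (-q) * F t ^ p) := by rw [h4]; ring
      _ = (t + R) ^ (2:ℕ) * (K₁ * (t + R) ^ (-q) * F t ^ p) := by rw [h6]
      _ ≤ (t + R) ^ (2:ℕ) * deriv (deriv F) t :=
          mul_le_mul_of_nonneg_left (hODE' t ht) (by positivity)
  have hF''pos : ∀ t : ℝ, T ≤ t → 0 < deriv (deriv F) t := by
    intro t ht
    have h1 := hC2 t ht
    have h2 : 0 < C * F t := mul_pos hCpos (hFpos' t ht)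
    nlinarith [sq_nonneg (t + R), htR t ht]
  have hmonoF' : MonotoneOn (deriv F) (Set.Ici T) := by
    refine monoIci (fun t ht => hdF' t (hTpos t ht)) (fun t ht => (hF''pos t (le_of_lt ht)).le)
  -- Step 1 : a point where F' > 0
  obtain ⟨T₂, hT₂T, hFT₂'⟩ : ∃ T₂, T ≤ T₂ ∧ 0 < deriv F T₂ := by
    by_contra h
    push_neg at h
    have hanti : AntitoneOn F (Set.Ici T) :=
      antiIci (fun t ht => hdF t (hTpos t ht)) (fun t ht => h t (le_of_lt ht))
    set s : ℝ := max T (F T / K₀) + 1 with hs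
    have hsT : T ≤ s := by
      have := le_max_left T (F T / K₀); simp only [hs]; linarith
    have hs1 : F T / K₀ + 1 ≤ s := by
      have := le_max_right T (F T / K₀); simp only [hs]; linarith
    have h2 : F s ≤ F T := hanti (Set.mem_Ici.2 (le_refl T)) (Set.mem_Ici.2 hsT) hsT
    have h3 : K₀ * (s + R) ^ a ≤ F s := hlow' s hsT
    have h4 : s + R ≤ (s + R) ^ a := by
      have h5 : (1:ℝ) ≤ s + R := by linarith
      calc s + R = (s + R) ^ (1:ℝ) := (Real.rpow_one _).symm
        _ ≤ (s + R) ^ a := Real.rpow_le_rpow_of_exponent_le h5 ha1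
    have h6 : F T < K₀ * (s + R) := by
      have h7 : F T / K₀ < s + R := by linarith
      calc F T = K₀ * (F T / K₀) := by field_simp
        _ < K₀ * (s + R) := mul_lt_mul_of_pos_left h7 hK₀pos
    have h7 : K₀ * (s + R) ≤ K₀ * (s + R) ^ a := mul_le_mul_of_nonneg_left h4 hK₀pos.le
    linarith
  have hF'pos : ∀ t : ℝ, T₂ ≤ t → 0 < deriv F t := fun t ht =>
    lt_of_lt_of_le hFT₂' (hmonoF' (Set.mem_Ici.2 hT₂T) (Set.mem_Ici.2 (le_trans hT₂T ht)) ht)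
  have hmonoF : MonotoneOn F (Set.Ici T₂) :=
    monoIci (fun t ht => hdF t (hTpos t (le_trans hT₂T ht)))
      (fun t ht => (hF'pos t (le_of_lt ht)).le)
  -- Step 2 : a point where (t+R) F' ≥ L F
  obtain ⟨t₃, ht₃2, hJ₃⟩ : ∃ t₃, T₂ ≤ t₃ ∧ L * F t₃ ≤ (t₃ + R) * deriv F t₃ := by
    by_contra hcon
    push_neg at hcon
    have hT₂R : 0 < T₂ + R := htR T₂ hT₂T
    set ts : ℝ := 2 * T₂ + R with hts
    have htsT : T₂ ≤ ts := by
      have := hTpos T₂ hT₂T; simp only [hts]; linarith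
    have htsR : ts + R = 2 * (T₂ + R) := by simp only [hts]; ring
    clear_value ts
    have hts0 : 0 < ts + R := by rw [htsR]; linarith
    -- the function F t * (t+R)^(-L) is decreasing
    have hrd : ∀ t ∈ Set.Ici T₂, HasDerivAt (fun u => F u * (u + R) ^ (-L))
        (deriv F t * (t + R) ^ (-L) + F t * (1 * -L * (t + R) ^ (-L - 1))) t := by
      intro t ht
      have h0 : 0 < t + R := htR t (le_trans hT₂T ht)
      have h1 : HasDerivAt (fun u : ℝ => u + R) 1 t := (hasDerivAt_id t).add_const R
      exact (hdF t (hTpos t (le_trans hT₂T ht))).mul (h1.rpow_const (Or.inl h0.ne'))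
    have hranti : AntitoneOn (fun u => F u * (u + R) ^ (-L)) (Set.Ici T₂) := by
      apply antiIci hrd
      intro t ht
      have h0 : 0 < t + R := htR t (le_trans hT₂T ht.le)
      have h1 := hcon t ht.le
      have h2 : (0:ℝ) < (t + R) ^ (-L - 1) := Real.rpow_pos_of_pos h0 _
      have h4 : (t + R) ^ (-L) = (t + R) ^ (-L - 1) * (t + R) := by
        have := Real.rpow_add_one h0.ne' (-L - 1)
        rw [show -L - 1 + 1 = -L by ring] at this
        exact this
      rw [h4]
      nlinarith
    have hFub : F ts ≤ 2 ^ L * F T₂ := by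
      have h1 := hranti (Set.mem_Ici.2 (le_refl T₂)) (Set.mem_Ici.2 htsT) htsT
      have h4 : F ts = (F ts * (ts + R) ^ (-L)) * (ts + R) ^ L := by
        rw [mul_assoc, ← Real.rpow_add hts0]
        norm_num
      rw [h4]
      have huni : (T₂ + R) ^ (-L) * (T₂ + R) ^ L = 1 := by
        rw [← Real.rpow_add hT₂R]; norm_num
      calc (F ts * (ts + R) ^ (-L)) * (ts + R) ^ L ≤ (F T₂ * (T₂ + R) ^ (-L)) * (ts + R) ^ L :=
            mul_le_mul_of_nonneg_right h1 (Real.rpow_nonneg hts0.le L)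
        _ = 2 ^ L * F T₂ := by
            rw [htsR, Real.mul_rpow (by norm_num : (0:ℝ) ≤ 2) hT₂R.le]
            calc F T₂ * (T₂ + R) ^ (-L) * (2 ^ L * (T₂ + R) ^ L)
                = 2 ^ L * F T₂ * ((T₂ + R) ^ (-L) * (T₂ + R) ^ L) := by ring
              _ = 2 ^ L * F T₂ := by rw [huni, mul_one]
    -- the function F' + C F(T₂)/(t+R) is increasing
    have hpd : ∀ t ∈ Set.Ici T₂, HasDerivAt (fun u => deriv F u + C * F T₂ * (u + R)⁻¹)
        (deriv (deriv F) t + C * F T₂ * (-1 / (t + R) ^ 2)) t := by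
      intro t ht
      have h0 : 0 < t + R := htR t (le_trans hT₂T ht)
      have h1 : HasDerivAt (fun u : ℝ => u + R) 1 t := (hasDerivAt_id t).add_const R
      exact (hdF' t (hTpos t (le_trans hT₂T ht))).add ((h1.inv h0.ne').const_mul (C * F T₂))
    have hpm : MonotoneOn (fun u => deriv F u + C * F T₂ * (u + R)⁻¹) (Set.Ici T₂) := by
      apply monoIci hpd
      intro t ht
      have htT : T ≤ t := le_trans hT₂T ht.le
      have h0 : 0 < t + R := htR t htT
      have h1 := hC2 t htT
      have h2 : F T₂ ≤ F t := hmonoF (Set.mem_Ici.2 (le_refl T₂)) (Set.mem_Ici.2 ht.le) ht.le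
      have h3 : C * F T₂ / (t + R) ^ 2 ≤ deriv (deriv F) t := by
        rw [div_le_iff₀ (by positivity)]
        nlinarith
      have h4 : C * F T₂ * (-1 / (t + R) ^ 2) = -(C * F T₂ / (t + R) ^ 2) := by ring
      rw [h4]
      linarith
    have hkey := hpm (Set.mem_Ici.2 (le_refl T₂)) (Set.mem_Ici.2 htsT) htsT
    have hkey' : deriv F T₂ + C * F T₂ * (T₂ + R)⁻¹ ≤ deriv F ts + C * F T₂ * (ts + R)⁻¹ := hkey
    have hinv2 : (T₂ + R)⁻¹ - (ts + R)⁻¹ = (ts + R)⁻¹ := by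
      rw [htsR]
      field_simp
      ring
    have hF'ts : deriv F T₂ + C * F T₂ * (ts + R)⁻¹ ≤ deriv F ts := by
      have h5 : C * F T₂ * (T₂ + R)⁻¹ - C * F T₂ * (ts + R)⁻¹ = C * F T₂ * (ts + R)⁻¹ := by
        rw [← mul_sub, hinv2]
      linarith
    have hJts := hcon ts htsT
    have h8 : (ts + R) * (deriv F T₂ + C * F T₂ * (ts + R)⁻¹) ≤ (ts + R) * deriv F ts :=
      mul_le_mul_of_nonneg_left hF'ts hts0.le
    have h13 : (ts + R) * (deriv F T₂ + C * F T₂ * (ts + R)⁻¹)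
        = (ts + R) * deriv F T₂ + C * F T₂ := by
      field_simp
    have h10 : L * F ts ≤ L * (2 ^ L * F T₂) := mul_le_mul_of_nonneg_left hFub (by linarith)
    have h11 : L * 2 ^ L * F T₂ + K₁ * F T₂ ≤ C * F T₂ := by
      have h14 : L * 2 ^ L + K₁ ≤ C := by
        rw [hCD, hDdef]; nlinarith [sq_nonneg L]
      nlinarith [hFpos' T₂ hT₂T]
    have h12 : 0 < (ts + R) * deriv F T₂ := mul_pos hts0 hFT₂'
    linarith [h8, h13, hJts, h10, h11, h12, mul_pos hK₁ (hFpos' T₂ hT₂T)]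
  have ht₃T : T ≤ t₃ := le_trans hT₂T ht₃2
  -- Step 3 : Riccati barrier, (t+R) F' ≥ L F for all t ≥ t₃
  have hJ : ∀ t : ℝ, t₃ ≤ t → L * F t ≤ (t + R) * deriv F t := by
    have hd : ∀ t ∈ Set.Ici t₃, HasDerivAt (fun u => (u + R) * deriv F u - L * F u)
        ((1 * deriv F t + (t + R) * deriv (deriv F) t) - L * deriv F t) t := by
      intro t ht
      have h0 := hTpos t (le_trans ht₃T ht)
      exact (((hasDerivAt_id t).add_const R).mul (hdF' t h0)).sub ((hdF t h0).const_mul L)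
    have h0' : 0 ≤ (t₃ + R) * deriv F t₃ - L * F t₃ := by linarith
    have hinv : ∀ t ∈ Set.Ici t₃, ((t + R) * deriv F t - L * F t ≤ 0) →
        0 ≤ (1 * deriv F t + (t + R) * deriv (deriv F) t) - L * deriv F t := by
      intro t ht hJt
      have htT : T ≤ t := le_trans ht₃T ht
      have h0 : 0 < t + R := htR t htT
      have h1 := hC2 t htT
      have hF' : 0 < deriv F t := hF'pos t (le_trans ht₃2 ht)
      have hFt : 0 < F t := hFpos' t htT
      rw [← mul_nonneg_iff_of_pos_left h0]
      have h2 : (t + R) * deriv F t ≤ L * F t := by linarith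
      have h3 : (L - 1) * ((t + R) * deriv F t) ≤ (L - 1) * (L * F t) :=
        mul_le_mul_of_nonneg_left h2 (by linarith)
      have h4 : L * L ≤ C := by
        rw [hCD, hDdef]
        nlinarith [Real.rpow_pos_of_pos (two_pos) L]
      have h5 : (L - 1) * (L * F t) ≤ C * F t := by nlinarith
      have e : (t + R) * ((1 * deriv F t + (t + R) * deriv (deriv F) t) - L * deriv F t)
          = (t + R) ^ 2 * deriv (deriv F) t - (L - 1) * ((t + R) * deriv F t) := by ring
      rw [e]
      linarith
    intro t ht
    have := barrier hd h0' hinv t (Set.mem_Ici.2 ht)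
    linarith [this]
  -- Step 4 : lower bound F ≥ K' (t+R)^L
  set K' : ℝ := F t₃ * (t₃ + R) ^ (-L) with hK'def
  have hK'pos : 0 < K' := mul_pos (hFpos' t₃ ht₃T) (Real.rpow_pos_of_pos (htR t₃ ht₃T) _)
  have hlow2 : ∀ t : ℝ, t₃ ≤ t → K' * (t + R) ^ L ≤ F t := by
    have hd : ∀ t ∈ Set.Ici t₃, HasDerivAt (fun u => F u * (u + R) ^ (-L))
        (deriv F t * (t + R) ^ (-L) + F t * (1 * -L * (t + R) ^ (-L - 1))) t := by
      intro t ht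
      have h0 : 0 < t + R := htR t (le_trans ht₃T ht)
      have h1 : HasDerivAt (fun u : ℝ => u + R) 1 t := (hasDerivAt_id t).add_const R
      exact (hdF t (hTpos t (le_trans ht₃T ht))).mul (h1.rpow_const (Or.inl h0.ne'))
    have hmon : MonotoneOn (fun u => F u * (u + R) ^ (-L)) (Set.Ici t₃) := by
      apply monoIci hd
      intro t ht
      have h0 : 0 < t + R := htR t (le_trans ht₃T ht.le)
      have h1 := hJ t ht.le
      have h2 : (0:ℝ) < (t + R) ^ (-L - 1) := Real.rpow_pos_of_pos h0 _
      have h4 : (t + R) ^ (-L) = (t + R) ^ (-L - 1) * (t + R) := by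
        have h5 := Real.rpow_add_one h0.ne' (-L - 1)
        rw [show -L - 1 + 1 = -L by ring] at h5
        exact h5
      rw [h4]
      nlinarith
    intro t ht
    have h0 : 0 < t + R := htR t (le_trans ht₃T ht)
    have h1 : F t₃ * (t₃ + R) ^ (-L) ≤ F t * (t + R) ^ (-L) :=
      hmon (Set.mem_Ici.2 (le_refl t₃)) (Set.mem_Ici.2 ht) ht
    have h2 := mul_le_mul_of_nonneg_right h1 (Real.rpow_nonneg h0.le L)
    have h3 : F t * (t + R) ^ (-L) * (t + R) ^ L = F t := by
      rw [mul_assoc, ← Real.rpow_add h0]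
      norm_num
    rw [h3] at h2
    rw [hK'def]
    exact h2
  -- Step 5 : nonlinear barrier
  set r : ℝ := 1 + (p - 1) / 4 with hrdef
  have hr1 : 1 < r := by simp only [hrdef]; linarith
  set Q : ℝ := K₁ * K' ^ ((p - 1) / 2) * R ^ (p - 1) with hQdef
  have hQpos : 0 < Q := by
    have h1 : 0 < K' ^ ((p - 1) / 2) := Real.rpow_pos_of_pos hK'pos _
    have h2 : 0 < R ^ (p - 1) := Real.rpow_pos_of_pos hR _
    positivity
  set ε : ℝ := min (L * F t₃ ^ (1 - r)) (Real.sqrt (Q / r)) with hεdef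
  have hεpos : 0 < ε := by
    refine lt_min (mul_pos (by linarith) (Real.rpow_pos_of_pos (hFpos' t₃ ht₃T) _))
      (Real.sqrt_pos.2 (by positivity))
  have hεQ : r * ε ^ 2 ≤ Q := by
    have h1 : ε ≤ Real.sqrt (Q / r) := min_le_right _ _
    have h2 : ε ^ 2 ≤ Q / r := by
      have := Real.sq_sqrt (le_of_lt (show (0:ℝ) < Q / r by positivity))
      nlinarith [hεpos, Real.sqrt_nonneg (Q / r)]
    have h3 : r * ε ^ 2 ≤ r * (Q / r) :=
      mul_le_mul_of_nonneg_left h2 (by linarith)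
    have h4 : r * (Q / r) = Q := by field_simp
    exact le_of_le_of_eq h3 h4
  have hε1 : ε ≤ L * F t₃ ^ (1 - r) := min_le_left _ _
  clear_value K' r Q ε
  have hB : ∀ t : ℝ, t₃ ≤ t → ε * F t ^ r ≤ (t + R) * deriv F t := by
    have hd : ∀ t ∈ Set.Ici t₃, HasDerivAt (fun u => (u + R) * deriv F u - ε * F u ^ r)
        ((1 * deriv F t + (t + R) * deriv (deriv F) t)
          - ε * (deriv F t * r * F t ^ (r - 1))) t := by
      intro t ht
      have h0 := hTpos t (le_trans ht₃T ht)
      have hFt : 0 < F t := hFpos' t (le_trans ht₃T ht)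
      exact (((hasDerivAt_id t).add_const R).mul (hdF' t h0)).sub
        (((hdF t h0).rpow_const (Or.inl hFt.ne')).const_mul ε)
    have h0' : 0 ≤ (t₃ + R) * deriv F t₃ - ε * F t₃ ^ r := by
      have h1 : ε ≤ L * F t₃ ^ (1 - r) := hε1
      have hFt : 0 < F t₃ := hFpos' t₃ ht₃T
      have h2 : ε * F t₃ ^ r ≤ L * F t₃ ^ (1 - r) * F t₃ ^ r :=
        mul_le_mul_of_nonneg_right h1 (Real.rpow_nonneg hFt.le r)
      have h3 : L * F t₃ ^ (1 - r) * F t₃ ^ r = L * F t₃ := by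
        rw [mul_assoc, ← Real.rpow_add hFt, show (1:ℝ) - r + r = 1 by ring, Real.rpow_one]
      linarith
    have hinv : ∀ t ∈ Set.Ici t₃, ((t + R) * deriv F t - ε * F t ^ r ≤ 0) →
        0 ≤ (1 * deriv F t + (t + R) * deriv (deriv F) t)
          - ε * (deriv F t * r * F t ^ (r - 1)) := by
      intro t ht hBt
      have htT : T ≤ t := le_trans ht₃T ht
      have h0 : 0 < t + R := htR t htT
      have hFt : 0 < F t := hFpos' t htT
      have hF' : 0 < deriv F t := hF'pos t (le_trans ht₃2 ht)
      have hb : (t + R) * deriv F t ≤ ε * F t ^ r := by linarith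
      rw [← mul_nonneg_iff_of_pos_left h0]
      have e : (t + R) * ((1 * deriv F t + (t + R) * deriv (deriv F) t)
            - ε * (deriv F t * r * F t ^ (r - 1)))
          = (t + R) * deriv F t + (t + R) ^ 2 * deriv (deriv F) t
            - ε * r * F t ^ (r - 1) * ((t + R) * deriv F t) := by ring
      rw [e]
      have h7 : F t ^ (r - 1) * F t ^ r = F t ^ (r - 1 + r) := (Real.rpow_add hFt _ _).symm
      have h10 : ε * r * F t ^ (r - 1) * ((t + R) * deriv F t) ≤ Q * F t ^ (r - 1 + r) := by
        calc ε * r * F t ^ (r - 1) * ((t + R) * deriv F t)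
            ≤ ε * r * F t ^ (r - 1) * (ε * F t ^ r) :=
              mul_le_mul_of_nonneg_left hb (by positivity)
          _ = r * ε ^ 2 * F t ^ (r - 1 + r) := by rw [← h7]; ring
          _ ≤ Q * F t ^ (r - 1 + r) :=
              mul_le_mul_of_nonneg_right hεQ (Real.rpow_nonneg hFt.le _)
      have h8 : Q * F t ^ (r - 1 + r) ≤ (t + R) ^ 2 * deriv (deriv F) t := by
        have hODEt := hODE' t htT
        have e2 : (t + R) ^ (2:ℕ) = (t + R) ^ (2:ℝ) := by
          rw [show (2:ℝ) = ((2:ℕ):ℝ) by norm_num, Real.rpow_natCast]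
        have h81 : (t + R) ^ (2:ℕ) * (K₁ * (t + R) ^ (-q) * F t ^ p)
            ≤ (t + R) ^ (2:ℕ) * deriv (deriv F) t :=
          mul_le_mul_of_nonneg_left hODEt (by positivity)
        have hps : (r - 1 + r) + (p - 1) / 2 = p := by rw [hrdef]; ring
        have h82 : F t ^ p = F t ^ (r - 1 + r) * F t ^ ((p - 1) / 2) := by
          rw [← Real.rpow_add hFt, hps]
        have h83 : K' ^ ((p - 1) / 2) * (t + R) ^ (L * ((p - 1) / 2)) ≤ F t ^ ((p - 1) / 2) := by
          have h84 := Real.rpow_le_rpow (by positivity) (hlow2 t ht)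
            (by positivity : (0:ℝ) ≤ (p - 1) / 2)
          rwa [Real.mul_rpow hK'pos.le (Real.rpow_nonneg h0.le L),
            ← Real.rpow_mul h0.le] at h84
        have hLe : L * ((p - 1) / 2) = (a + 1) * (p - 1) := by rw [hLdef]; ring
        have h85 : (2:ℝ) + -q + (a + 1) * (p - 1) = p - 1 := by linear_combination hapq
        have h86 : (t + R) ^ (2:ℝ) * (t + R) ^ (-q) * (t + R) ^ (L * ((p - 1) / 2))
            = (t + R) ^ (p - 1) := by
          rw [hLe, ← Real.rpow_add h0, ← Real.rpow_add h0, h85]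
        have h87 : R ^ (p - 1) ≤ (t + R) ^ (p - 1) :=
          Real.rpow_le_rpow hR.le (by linarith) (by linarith)
        calc Q * F t ^ (r - 1 + r) = K₁ * K' ^ ((p - 1) / 2) * R ^ (p - 1) * F t ^ (r - 1 + r) := by
              rw [hQdef]
          _ ≤ K₁ * K' ^ ((p - 1) / 2) * (t + R) ^ (p - 1) * F t ^ (r - 1 + r) := by
              have := mul_le_mul_of_nonneg_left h87
                (by positivity : (0:ℝ) ≤ K₁ * K' ^ ((p - 1) / 2))
              exact mul_le_mul_of_nonneg_right (by linarith [this]) (Real.rpow_nonneg hFt.le _)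
          _ = (t + R) ^ (2:ℝ) * (K₁ * (t + R) ^ (-q)
                * (F t ^ (r - 1 + r) * (K' ^ ((p - 1) / 2) * (t + R) ^ (L * ((p - 1) / 2))))) := by
              rw [← h86]; ring
          _ ≤ (t + R) ^ (2:ℝ) * (K₁ * (t + R) ^ (-q)
                * (F t ^ (r - 1 + r) * F t ^ ((p - 1) / 2))) := by
              have hstep := mul_le_mul_of_nonneg_left h83
                (Real.rpow_nonneg hFt.le (r - 1 + r))
              have hpos1 : (0:ℝ) ≤ K₁ * (t + R) ^ (-q) := by positivity
              have hpos2 : (0:ℝ) ≤ (t + R) ^ (2:ℝ) := by positivity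
              exact mul_le_mul_of_nonneg_left
                (mul_le_mul_of_nonneg_left hstep hpos1) hpos2
          _ = (t + R) ^ (2:ℕ) * (K₁ * (t + R) ^ (-q) * F t ^ p) := by rw [h82, e2]
          _ ≤ (t + R) ^ (2:ℕ) * deriv (deriv F) t := h81
      linarith [mul_pos h0 hF', h10, h8]
    intro t ht
    have := barrier hd h0' hinv t (Set.mem_Ici.2 ht)
    linarith [this]
  -- Step 6 : finite-time blow-up, contradiction
  have hχd : ∀ t ∈ Set.Ici t₃, HasDerivAt
      (fun u => F u ^ (1 - r) + (r - 1) * ε * Real.log (u + R))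
      ((deriv F t * (1 - r) * F t ^ (1 - r - 1)) + (r - 1) * ε * (1 / (t + R))) t := by
    intro t ht
    have h0t := hTpos t (le_trans ht₃T ht)
    have h0 : 0 < t + R := htR t (le_trans ht₃T ht)
    have hFt : 0 < F t := hFpos' t (le_trans ht₃T ht)
    exact ((hdF t h0t).rpow_const (Or.inl hFt.ne')).add
      ((((hasDerivAt_id t).add_const R).log h0.ne').const_mul ((r - 1) * ε))
  have hχanti : AntitoneOn (fun u => F u ^ (1 - r) + (r - 1) * ε * Real.log (u + R))
      (Set.Ici t₃) := by
    apply antiIci hχd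
    intro t ht
    have htT : T ≤ t := le_trans ht₃T ht.le
    have h0 : 0 < t + R := htR t htT
    have hFt : 0 < F t := hFpos' t htT
    have hBt := hB t ht.le
    have h1 : ε * (F t ^ r * F t ^ (-r)) ≤ (t + R) * deriv F t * F t ^ (-r) := by
      calc ε * (F t ^ r * F t ^ (-r)) = (ε * F t ^ r) * F t ^ (-r) := by ring
        _ ≤ ((t + R) * deriv F t) * F t ^ (-r) :=
            mul_le_mul_of_nonneg_right hBt (Real.rpow_nonneg hFt.le _)
    have h2 : F t ^ r * F t ^ (-r) = 1 := by
      rw [← Real.rpow_add hFt, show r + -r = 0 by ring, Real.rpow_zero]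
    rw [h2, mul_one] at h1
    have h4 : (r - 1) * ε ≤ (r - 1) * ((t + R) * deriv F t * F t ^ (-r)) :=
      mul_le_mul_of_nonneg_left h1 (by linarith)
    rw [← neg_nonneg, ← mul_nonneg_iff_of_pos_left h0]
    have e : (t + R) * (-(deriv F t * (1 - r) * F t ^ (1 - r - 1) + (r - 1) * ε * (1 / (t + R))))
        = (r - 1) * ((t + R) * deriv F t * F t ^ (1 - r - 1)) - (r - 1) * ε := by
      field_simp
      ring
    rw [e, show (1:ℝ) - r - 1 = -r by ring]
    linarith
  set M : ℝ := (F t₃ ^ (1 - r) + (r - 1) * ε * Real.log (t₃ + R)) / ((r - 1) * ε) with hM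
  set t₆ : ℝ := max t₃ (Real.exp M - R) with ht₆def
  have ht₆3 : t₃ ≤ t₆ := le_max_left _ _
  have hexp : Real.exp M ≤ t₆ + R := by
    have := le_max_right t₃ (Real.exp M - R); simp only [ht₆def]; linarith
  clear_value M t₆
  have h0₆ : 0 < t₆ + R := htR t₆ (le_trans ht₃T ht₆3)
  have hrε : 0 < (r - 1) * ε := mul_pos (by linarith) hεpos
  have hlog : M ≤ Real.log (t₆ + R) := by
    calc M = Real.log (Real.exp M) := (Real.log_exp M).symm
      _ ≤ Real.log (t₆ + R) := Real.log_le_log (Real.exp_pos M) hexp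
  have hχ : F t₆ ^ (1 - r) + (r - 1) * ε * Real.log (t₆ + R)
      ≤ F t₃ ^ (1 - r) + (r - 1) * ε * Real.log (t₃ + R) :=
    hχanti (Set.mem_Ici.2 (le_refl t₃)) (Set.mem_Ici.2 ht₆3) ht₆3
  have hMe : F t₃ ^ (1 - r) + (r - 1) * ε * Real.log (t₃ + R) = M * ((r - 1) * ε) := by
    rw [hM, div_mul_cancel₀ _ hrε.ne']
  have h2 : (r - 1) * ε * M ≤ (r - 1) * ε * Real.log (t₆ + R) :=
    mul_le_mul_of_nonneg_left hlog hrε.le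
  have h3 : 0 < F t₆ ^ (1 - r) :=
    Real.rpow_pos_of_pos (hFpos' t₆ (le_trans ht₃T ht₆3)) _
  linarith [hχ, h2, h3, hMe]
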